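/- For every n ≥ 1 and every real t, ∑_{j=0}^{n} (−t)^{n−j}·C(n,j)·C(n+j,j)·t^j/(j+1) = 0. Equivalently, ∑_{j=0}^{n} (−1)^{n−j}·C(n,j)·C(n+j,j)/(j+1) = 0 for n ≥ 1. -/

import Mathlib

open Finset

lemma fwd_aux (n : ℕ) :
    ∑ k ∈ Finset.range (n + 2),
      (-1 : ℤ) ^ (n + 1 - k) * ((n + 1).choose k) * ((n - 1 + k).choose n) = 0 := by
  have h1 : (fwdDiff 1)^[n] (fun x : ℕ => (x.choose n : ℤ)) = fun _ => 1 := by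
    simpa using fwdDiff_iter_choose 0 n
  have h2 : (fwdDiff 1)^[n+1] (fun x : ℕ => (x.choose n : ℤ)) = fun _ => 0 := by
    rw [Function.iterate_succ_apply', h1]
    funext x; simp [fwdDiff]
  have h3 := fwdDiff_iter_eq_sum_shift (1 : ℕ) (fun x : ℕ => (x.choose n : ℤ)) (n + 1) (n - 1)
  rw [h2] at h3
  simp only [smul_eq_mul, mul_one, zsmul_eq_mul] at h3
  rw [← h3]

lemma scalar_sum (n : ℕ) (hn : 1 ≤ n) :
    ∑ j ∈ Finset.range (n + 1),
      (-1 : ℝ) ^ (n - j) * (Nat.choose n j : ℝ) * (Nat.choose (n + j) j : ℝ) /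
        ((j : ℝ) + 1) = 0 := by
  have hne : ((n : ℝ) + 1) ≠ 0 := by positivity
  have hS : (∑ j ∈ Finset.range (n + 1),
      (-1 : ℝ) ^ (n - j) * (Nat.choose n j : ℝ) * (Nat.choose (n + j) j : ℝ) /
        ((j : ℝ) + 1)) * ((n : ℝ) + 1) = 0 := by
    rw [Finset.sum_mul]
    have key : (∑ k ∈ Finset.range (n + 2),
        (((-1 : ℤ) ^ (n + 1 - k) * ((n + 1).choose k) * ((n - 1 + k).choose n) : ℤ) : ℝ)) = 0 := by
      rw [← Int.cast_sum, fwd_aux n, Int.cast_zero]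
    rw [Finset.sum_range_succ'] at key
    have h0 : (((-1 : ℤ) ^ (n + 1 - 0) * ((n + 1).choose 0) * ((n - 1 + 0).choose n) : ℤ) : ℝ) = 0 := by
      have : (n - 1).choose n = 0 := Nat.choose_eq_zero_of_lt (by omega)
      simp [this]
    rw [h0, add_zero] at key
    rw [← key]
    apply Finset.sum_congr rfl
    intro j hj
    have hj' : j ≤ n := Nat.lt_succ_iff.mp (Finset.mem_range.mp hj)
    have hsym : (n + j).choose j = (n + j).choose n := by
      rw [← Nat.choose_symm (by omega : j ≤ n + j)]
      congr 1; omega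
    have hsucc : (n + 1) * n.choose j = (n + 1).choose (j + 1) * (j + 1) :=
      Nat.add_one_mul_choose_eq n j
    have hidx : n - 1 + (j + 1) = n + j := by omega
    have hexp : n + 1 - (j + 1) = n - j := by omega
    rw [hidx, hexp, hsym]
    have hjne : ((j : ℝ) + 1) ≠ 0 := by positivity
    have hcast : ((n : ℝ) + 1) * (n.choose j : ℝ) = ((n + 1).choose (j + 1) : ℝ) * ((j : ℝ) + 1) := by
      exact_mod_cast hsucc
    push_cast
    field_simp
    linear_combination ((n + j).choose n : ℝ) * hcast
  exact (mul_eq_zero.mp hS).resolve_right hne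

theorem legendre_moment_vanishes (n : ℕ) (hn : 1 ≤ n) :
    (∀ t : ℝ,
      ∑ j ∈ Finset.range (n + 1),
        (-t) ^ (n - j) * (Nat.choose n j : ℝ) * (Nat.choose (n + j) j : ℝ) * t ^ j /
          ((j : ℝ) + 1) = 0) ∧
    ∑ j ∈ Finset.range (n + 1),
      (-1 : ℝ) ^ (n - j) * (Nat.choose n j : ℝ) * (Nat.choose (n + j) j : ℝ) /
        ((j : ℝ) + 1) = 0 := by
  refine ⟨fun t => ?_, scalar_sum n hn⟩
  have heq : ∑ j ∈ Finset.range (n + 1),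
      (-t) ^ (n - j) * (Nat.choose n j : ℝ) * (Nat.choose (n + j) j : ℝ) * t ^ j /
        ((j : ℝ) + 1)
      = t ^ n * ∑ j ∈ Finset.range (n + 1),
        (-1 : ℝ) ^ (n - j) * (Nat.choose n j : ℝ) * (Nat.choose (n + j) j : ℝ) /
          ((j : ℝ) + 1) := by
    rw [Finset.mul_sum]
    apply Finset.sum_congr rfl
    intro j hj
    have hj' : j ≤ n := Nat.lt_succ_iff.mp (Finset.mem_range.mp hj)
    have hpow : t ^ (n - j) * t ^ j = t ^ n := by
      rw [← pow_add]; congr 1; omega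
    rw [neg_pow]
    rw [show (-1 : ℝ) ^ (n - j) * t ^ (n - j) * (Nat.choose n j : ℝ) * (Nat.choose (n + j) j : ℝ)
          * t ^ j / ((j : ℝ) + 1)
        = (-1 : ℝ) ^ (n - j) * (Nat.choose n j : ℝ) * (Nat.choose (n + j) j : ℝ) / ((j : ℝ) + 1)
          * (t ^ (n - j) * t ^ j) from by ring, hpow]
    ring
  rw [heq, scalar_sum n hn, mul_zero]
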